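/- Identify each vertex of H^{cyclic}_{q,ε} (concatenations of q cyclic permutations of Z_q) with a vector in (Z_q)^q recording the cyclic shifts. With ε = 1/q, two vertices u,v are adjacent in H^{cyclic}_{q,ε} if and only if the difference vector u−v ∈ (Z_q)^q takes at least q−1 distinct values. Consequently, the q² sets A_{i,j} = {u : u_1−u_2 = i, u_1−u_3 = j} (i,j ∈ Z_q) are independent and cover all vertices, so χ(H^{cyclic}_{q,ε}) ≤ q². -/

import Mathlib

/-- The concatenation of q cyclic permutations of Z_q with shift vector s: the entry of the
i-th block at position t is t + s_i. -/
def cyc (q : ℕ) (s : Fin q → ZMod q) (p : Fin q × Fin q) : ZMod q :=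
  ((p.2 : ℕ) : ZMod q) + s p.1

/-- The graph H^{cyclic}_{q,ε} with ε = 1/q, on the concatenations of q cyclic permutations of
Z_q (identified with their shift vectors in (Z_q)^q): u ~ v iff the number of distinct pairs
(u_i, v_i) over the q² coordinates is at least (1-ε)q² = q² - q. -/
def HcycEps (q : ℕ) : SimpleGraph (Fin q → ZMod q) where
  Adj s t := s ≠ t ∧
    q ^ 2 - q ≤ (Finset.univ.image fun p : Fin q × Fin q => (cyc q s p, cyc q t p)).card
  symm := by
    constructor
    rintro s t ⟨hne, hc⟩
    refine ⟨hne.symm, ?_⟩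
    have h : (Finset.univ.image fun p : Fin q × Fin q => (cyc q t p, cyc q s p)) =
        (Finset.univ.image fun p : Fin q × Fin q => (cyc q s p, cyc q t p)).image
          Prod.swap := by
      rw [Finset.image_image]; rfl
    rw [h, Finset.card_image_of_injective _ Prod.swap_injective]
    exact hc
  loopless := by constructor; rintro s ⟨hne, _⟩; exact hne rfl


lemma card_pairs (q : ℕ) (hq : 1 ≤ q) (s t : Fin q → ZMod q) :
    (Finset.univ.image fun p : Fin q × Fin q => (cyc q s p, cyc q t p)).card
      = q * (Finset.univ.image fun i : Fin q => s i - t i).card := by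
  haveI : NeZero q := ⟨Nat.one_le_iff_ne_zero.mp hq⟩
  have hinj : Function.Injective (fun x : ZMod q × ZMod q => (x.1, x.1 - x.2)) := by
    rintro ⟨a, b⟩ ⟨c, d⟩ h
    simp only [Prod.mk.injEq] at h
    obtain ⟨rfl, h2⟩ := h
    exact Prod.ext rfl (by linear_combination -h2)
  have him : (Finset.univ.image fun p : Fin q × Fin q => (cyc q s p, cyc q t p))
      = ((Finset.univ ×ˢ (Finset.univ.image fun i : Fin q => s i - t i)).image
          fun x : ZMod q × ZMod q => (x.1, x.1 - x.2)) := by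
    apply Finset.Subset.antisymm
    · intro x hx
      simp only [Finset.mem_image, Finset.mem_univ, true_and] at hx
      obtain ⟨⟨i, j⟩, hx⟩ := hx
      refine Finset.mem_image.mpr ⟨(cyc q s (i, j), s i - t i),
        Finset.mem_product.mpr ⟨Finset.mem_univ _,
          Finset.mem_image_of_mem _ (Finset.mem_univ i)⟩, ?_⟩
      rw [← hx]
      refine Prod.ext rfl ?_
      show cyc q s (i, j) - (s i - t i) = cyc q t (i, j)
      simp only [cyc]
      ring
    · intro x hx
      simp only [Finset.mem_image, Finset.mem_product, Finset.mem_univ, true_and] at hx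
      obtain ⟨⟨c, d⟩, hd, rfl⟩ := hx
      obtain ⟨i, hi⟩ := hd
      have hi' : s i - t i = d := hi
      refine Finset.mem_image.mpr ⟨(i, ⟨(c - s i).val, ZMod.val_lt _⟩), Finset.mem_univ _, ?_⟩
      have hj : (((c - s i).val : ℕ) : ZMod q) = c - s i := by
        rw [ZMod.natCast_val, ZMod.cast_id]
      refine Prod.ext ?_ ?_
      · show cyc q s (i, _) = c
        simp only [cyc]
        rw [hj]; ring
      · show cyc q t (i, _) = c - d
        simp only [cyc]
        rw [hj, ← hi']; ring
  rw [him, Finset.card_image_of_injective _ hinj, Finset.card_product,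
    Finset.card_univ, ZMod.card]

lemma stmt16_adj (q : ℕ) (hq : 1 ≤ q) : ∀ s t : Fin q → ZMod q,
    (HcycEps q).Adj s t ↔
      s ≠ t ∧ q - 1 ≤ (Finset.univ.image fun i : Fin q => s i - t i).card := by
  intro s t
  show (s ≠ t ∧ _) ↔ _
  rw [card_pairs q hq s t]
  have h1 : q ^ 2 - q = q * (q - 1) := by rw [pow_two, ← Nat.mul_sub_one]
  rw [h1]
  constructor
  · rintro ⟨hne, hc⟩
    exact ⟨hne, Nat.le_of_mul_le_mul_left hc (by omega)⟩
  · rintro ⟨hne, hc⟩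
    exact ⟨hne, Nat.mul_le_mul_left q hc⟩

theorem stmt16 (q : ℕ) (hq : 1 ≤ q) :
    (∀ s t : Fin q → ZMod q,
      (HcycEps q).Adj s t ↔
        s ≠ t ∧ q - 1 ≤ (Finset.univ.image fun i : Fin q => s i - t i).card) ∧
    (HcycEps q).chromaticNumber ≤ (q ^ 2 : ℕ) := by
  haveI : NeZero q := ⟨Nat.one_le_iff_ne_zero.mp hq⟩
  refine ⟨stmt16_adj q hq, ?_⟩
  rcases le_or_gt 3 q with h3 | h3
  · -- coloring by (u 0 - u 1, u 0 - u 2)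
    set i0 : Fin q := ⟨0, by omega⟩ with hi0
    set i1 : Fin q := ⟨1, by omega⟩ with hi1
    set i2 : Fin q := ⟨2, by omega⟩ with hi2
    have hvalid : ∀ u v : Fin q → ZMod q, (HcycEps q).Adj u v →
        (u i0 - u i1, u i0 - u i2) ≠ (v i0 - v i1, v i0 - v i2) := by
      intro u v hadj' hc
      rw [stmt16_adj q hq] at hadj'
      obtain ⟨hne, hcard⟩ := hadj'
      simp only [Prod.mk.injEq] at hc
      obtain ⟨h1, h2⟩ := hc
      have e1 : u i1 - v i1 = u i0 - v i0 := by linear_combination -h1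
      have e2 : u i2 - v i2 = u i0 - v i0 := by linear_combination -h2
      have hsub : (Finset.univ.image fun i : Fin q => u i - v i) ⊆
          Finset.image (fun i : Fin q => u i - v i)
            ((Finset.univ.erase i1).erase i2) := by
        intro x hx
        simp only [Finset.mem_image] at hx ⊢
        obtain ⟨i, -, rfl⟩ := hx
        by_cases hi : i = i1
        · exact ⟨i0, by simp [Finset.mem_erase, hi0, hi1, hi2, Fin.ext_iff],
            by rw [hi, e1]⟩
        by_cases hi' : i = i2
        · exact ⟨i0, by simp [Finset.mem_erase, hi0, hi1, hi2, Fin.ext_iff],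
            by rw [hi', e2]⟩
        exact ⟨i, by simp [Finset.mem_erase, hi, hi'], rfl⟩
      have hle : (Finset.univ.image fun i : Fin q => u i - v i).card ≤ q - 2 := by
        calc (Finset.univ.image fun i : Fin q => u i - v i).card
            ≤ ((Finset.univ.erase i1).erase i2).card :=
              le_trans (Finset.card_le_card hsub) Finset.card_image_le
          _ = q - 2 := by
              rw [Finset.card_erase_of_mem
                  (by simp [Finset.mem_erase, hi1, hi2, Fin.ext_iff]),
                Finset.card_erase_of_mem (Finset.mem_univ _),
                Finset.card_univ, Fintype.card_fin]
              omega
      omega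
    let C : SimpleGraph.Coloring (HcycEps q) (ZMod q × ZMod q) :=
      SimpleGraph.Coloring.mk (fun u => (u i0 - u i1, u i0 - u i2))
        (fun h => hvalid _ _ h)
    have hle := C.colorable.chromaticNumber_le
    refine le_trans hle ?_
    have : Fintype.card (ZMod q × ZMod q) = q ^ 2 := by
      rw [Fintype.card_prod, ZMod.card, pow_two]
    rw [this]
  · -- q ≤ 2: use trivial coloring by all vertices
    have hle := (SimpleGraph.colorable_of_fintype (HcycEps q)).chromaticNumber_le
    refine le_trans hle ?_
    have hcard : Fintype.card (Fin q → ZMod q) = q ^ q := by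
      simp [ZMod.card]
    rw [hcard]
    exact_mod_cast Nat.pow_le_pow_right hq (by omega)
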